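/- MISELBO with L=1 is at least the average of standard ELBOs: (1/S)∑_s E_{z∼q_s}[log( p(x,z) / ((1/S)∑_j q_j(z)) )] ≥ (1/S)∑_s E_{z∼q_s}[log( p(x,z)/q_s(z) )], and the difference lies in the interval [0, log S]. -/
import Mathlib

open MeasureTheory Real
open scoped BigOperators

/-- MISELBO with `L = 1` is at least the average of standard ELBOs, and the gap lies in
`[0, log S]`. -/
theorem miselbo_ge_avg_elbo
    {α : Type*} [MeasurableSpace α] (μ : Measure α)
    (S : ℕ) (hS : 0 < S) (q : Fin S → α → ℝ) (p : α → ℝ)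
    (hq_meas : ∀ s, Measurable (q s))
    (hq_nonneg : ∀ s z, 0 ≤ q s z)
    (hq_prob : ∀ s, ∫ z, q s z ∂μ = 1)
    (hp_meas : Measurable p) (hp_nonneg : ∀ z, 0 ≤ p z)
    -- each `q s` is absolutely continuous w.r.t. the posterior `p(z|x) ∝ p(x,z)`
    (hq_ac : ∀ s z, p z = 0 → q s z = 0)
    (h_int_mis : ∀ s, Integrable
      (fun z => q s z * Real.log (p z / ((1 / (S : ℝ)) * ∑ j, q j z))) μ)
    (h_int_elbo : ∀ s, Integrable (fun z => q s z * Real.log (p z / q s z)) μ) :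
    (1 / (S : ℝ)) * ∑ s, ∫ z, q s z * Real.log (p z / ((1 / (S : ℝ)) * ∑ j, q j z)) ∂μ
      ≥ (1 / (S : ℝ)) * ∑ s, ∫ z, q s z * Real.log (p z / q s z) ∂μ
    ∧ (1 / (S : ℝ)) * ∑ s, ∫ z, q s z * Real.log (p z / ((1 / (S : ℝ)) * ∑ j, q j z)) ∂μ
        - (1 / (S : ℝ)) * ∑ s, ∫ z, q s z * Real.log (p z / q s z) ∂μ ∈
        Set.Icc (0 : ℝ) (Real.log S) := by
  have hSpos : (0 : ℝ) < (S : ℝ) := by exact_mod_cast hS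
  set m : α → ℝ := fun z => (1 / (S : ℝ)) * ∑ j, q j z with hm
  have hm_nonneg : ∀ z, 0 ≤ m z := fun z =>
    mul_nonneg (by positivity) (Finset.sum_nonneg fun j _ => hq_nonneg j z)
  have hqSm : ∀ s z, q s z ≤ (S : ℝ) * m z := by
    intro s z
    have : (S : ℝ) * m z = ∑ j, q j z := by
      simp only [m]; field_simp
    rw [this]
    exact Finset.single_le_sum (fun j _ => hq_nonneg j z) (Finset.mem_univ s)
  have hm_pos : ∀ s z, 0 < q s z → 0 < m z := by
    intro s z hq
    have := hqSm s z
    nlinarith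
  -- integrability of each q s
  have hq_int : ∀ s, Integrable (q s) μ := by
    intro s
    by_contra h
    have := hq_prob s
    rw [integral_undef h] at this
    norm_num at this
  have hm_int : Integrable m μ := by
    have : Integrable (fun z => ∑ j, q j z) μ := integrable_finset_sum _ fun j _ => hq_int j
    simpa [m] using this.const_mul (1 / (S : ℝ))
  have hm_integral : ∫ z, m z ∂μ = 1 := by
    have h1 : ∫ z, (∑ j, q j z) ∂μ = ∑ j, ∫ z, q j z ∂μ :=
      integral_finset_sum _ fun j _ => hq_int j
    have : ∫ z, m z ∂μ = (1 / (S : ℝ)) * ∫ z, (∑ j, q j z) ∂μ := by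
      simp only [m]; rw [integral_const_mul]
    rw [this, h1]
    simp [hq_prob]
    field_simp
  -- pointwise key identity
  have key : ∀ s z, q s z * Real.log (p z / m z) - q s z * Real.log (p z / q s z)
      = q s z * Real.log (q s z / m z) := by
    intro s z
    rcases eq_or_lt_of_le (hq_nonneg s z) with h0 | hpos
    · simp [← h0]
    · have hp : 0 < p z := by
        rcases eq_or_lt_of_le (hp_nonneg z) with h | h
        · exact absurd (hq_ac s z h.symm) (ne_of_gt hpos)
        · exact h
      have hmz : 0 < m z := hm_pos s z hpos
      rw [Real.log_div (ne_of_gt hp) (ne_of_gt hmz),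
        Real.log_div (ne_of_gt hp) (ne_of_gt hpos),
        Real.log_div (ne_of_gt hpos) (ne_of_gt hmz)]
      ring
  -- integrability of the gap integrand
  have h_int_h : ∀ s, Integrable (fun z => q s z * Real.log (q s z / m z)) μ := by
    intro s
    have := (h_int_mis s).sub (h_int_elbo s)
    exact this.congr (Filter.Eventually.of_forall fun z => key s z)
  -- pointwise lower bound: q - m ≤ q log(q/m)
  have h_low : ∀ s z, q s z - m z ≤ q s z * Real.log (q s z / m z) := by
    intro s z
    rcases eq_or_lt_of_le (hq_nonneg s z) with h0 | hpos
    · simp [← h0, hm_nonneg z]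
    · have hmz : 0 < m z := hm_pos s z hpos
      have hx : 0 < m z / q s z := div_pos hmz hpos
      have := Real.log_le_sub_one_of_pos hx
      have hlog : Real.log (m z / q s z) = - Real.log (q s z / m z) := by
        rw [← Real.log_inv]; congr 1; field_simp
      rw [hlog] at this
      have h2 : 1 - m z / q s z ≤ Real.log (q s z / m z) := by linarith
      have h3 := mul_le_mul_of_nonneg_left h2 (le_of_lt hpos)
      calc q s z - m z = q s z * (1 - m z / q s z) := by field_simp
        _ ≤ q s z * Real.log (q s z / m z) := h3
  -- pointwise upper bound: q log(q/m) ≤ q log S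
  have h_up : ∀ s z, q s z * Real.log (q s z / m z) ≤ q s z * Real.log (S : ℝ) := by
    intro s z
    rcases eq_or_lt_of_le (hq_nonneg s z) with h0 | hpos
    · simp [← h0]
    · have hmz : 0 < m z := hm_pos s z hpos
      have hdiv : q s z / m z ≤ (S : ℝ) := (div_le_iff₀ hmz).mpr (hqSm s z)
      have : Real.log (q s z / m z) ≤ Real.log (S : ℝ) :=
        Real.log_le_log (div_pos hpos hmz) hdiv
      exact mul_le_mul_of_nonneg_left this (le_of_lt hpos)
  -- bounds on each integral ∫ h_s
  have hI_low : ∀ s, (0 : ℝ) ≤ ∫ z, q s z * Real.log (q s z / m z) ∂μ := by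
    intro s
    have h1 : ∫ z, (q s z - m z) ∂μ ≤ ∫ z, q s z * Real.log (q s z / m z) ∂μ :=
      integral_mono ((hq_int s).sub hm_int) (h_int_h s) (h_low s)
    have h2 : ∫ z, (q s z - m z) ∂μ = 0 := by
      rw [integral_sub (hq_int s) hm_int, hq_prob s, hm_integral]; ring
    linarith
  have hI_up : ∀ s, ∫ z, q s z * Real.log (q s z / m z) ∂μ ≤ Real.log (S : ℝ) := by
    intro s
    have h1 : ∫ z, q s z * Real.log (q s z / m z) ∂μ ≤ ∫ z, q s z * Real.log (S : ℝ) ∂μ :=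
      integral_mono (h_int_h s) ((hq_int s).mul_const _) (h_up s)
    have h2 : ∫ z, q s z * Real.log (S : ℝ) ∂μ = Real.log (S : ℝ) := by
      rw [integral_mul_const, hq_prob s, one_mul]
    linarith
  -- relating the integrals
  have hIdiff : ∀ s, ∫ z, q s z * Real.log (p z / m z) ∂μ
      - ∫ z, q s z * Real.log (p z / q s z) ∂μ
      = ∫ z, q s z * Real.log (q s z / m z) ∂μ := by
    intro s
    rw [← integral_sub (h_int_mis s) (h_int_elbo s)]
    exact integral_congr_ae (Filter.Eventually.of_forall fun z => key s z)
  have hgap : (1 / (S : ℝ)) * ∑ s, ∫ z, q s z * Real.log (p z / m z) ∂μ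
      - (1 / (S : ℝ)) * ∑ s, ∫ z, q s z * Real.log (p z / q s z) ∂μ
      = (1 / (S : ℝ)) * ∑ s, ∫ z, q s z * Real.log (q s z / m z) ∂μ := by
    rw [← mul_sub, ← Finset.sum_sub_distrib]
    congr 1
    exact Finset.sum_congr rfl fun s _ => hIdiff s
  have hsum_low : (0 : ℝ) ≤ ∑ s, ∫ z, q s z * Real.log (q s z / m z) ∂μ :=
    Finset.sum_nonneg fun s _ => hI_low s
  have hsum_up : ∑ s, ∫ z, q s z * Real.log (q s z / m z) ∂μ ≤ (S : ℝ) * Real.log (S : ℝ) := by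
    calc ∑ s, ∫ z, q s z * Real.log (q s z / m z) ∂μ
        ≤ ∑ _s : Fin S, Real.log (S : ℝ) := Finset.sum_le_sum fun s _ => hI_up s
      _ = (S : ℝ) * Real.log (S : ℝ) := by simp [Finset.sum_const, mul_comm]
  have hgap_low : (0 : ℝ) ≤ (1 / (S : ℝ)) * ∑ s, ∫ z, q s z * Real.log (q s z / m z) ∂μ :=
    mul_nonneg (by positivity) hsum_low
  have hgap_up : (1 / (S : ℝ)) * ∑ s, ∫ z, q s z * Real.log (q s z / m z) ∂μ
      ≤ Real.log (S : ℝ) := by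
    have h := mul_le_mul_of_nonneg_left hsum_up (le_of_lt (by positivity : (0:ℝ) < 1 / (S:ℝ)))
    calc (1 / (S : ℝ)) * ∑ s, ∫ z, q s z * Real.log (q s z / m z) ∂μ
        ≤ (1 / (S : ℝ)) * ((S : ℝ) * Real.log (S : ℝ)) := h
      _ = Real.log (S : ℝ) := by field_simp
  constructor
  · linarith [hgap, hgap_low]
  · rw [hgap]
    exact ⟨hgap_low, hgap_up⟩
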